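/- arXiv:2512.15245 — 3 statements merged into one kernel-verified Lean document; each statement's English description precedes it below -/
import Mathlib

section
/- Let ψ ∈ L²((0,∞); H') and ξ ∈ L²((0,∞); H) (with H a separable Hilbert space and H' its dual), let φ(z,ζ) = ψ(z)ξ(ζ), and set R_x = ∫_x^∞ ξ(z)ψ(z) dz, a trace-class operator on H. Suppose I + R_x is invertible for x > x₀ and define T(x,y) = −ψ(x)(I+R_x)^{-1}ξ(y). Then T solves the Gelfand–Levitan–Marchenko equation φ(x,y) + T(x,y) + ∫_x^∞ T(x,z)φ(z,y) dz = 0 for x₀ < x < y. -/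
open MeasureTheory Set

/- Rank-one-kernel Gelfand–Levitan–Marchenko equation: with
φ(z,ζ) = ψ(z)ξ(ζ), R_x = ∫_x^∞ ξ(z)ψ(z)dz, I+R_x invertible for x > x₀, and
T(x,y) = −ψ(x)(I+R_x)^{-1}ξ(y), one has
φ(x,y) + T(x,y) + ∫_x^∞ T(x,z)φ(z,y)dz = 0 for x₀ < x < y. -/
theorem stmt7
    (H : Type*) [NormedAddCommGroup H] [InnerProductSpace ℂ H] [CompleteSpace H]
    [TopologicalSpace.SeparableSpace H]
    (ψ : ℝ → (H →L[ℂ] ℂ)) (ξ : ℝ → H) (x₀ : ℝ) (hx₀ : 0 ≤ x₀)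
    (hψ : MemLp ψ 2 (volume.restrict (Ioi (0:ℝ))))
    (hξ : MemLp ξ 2 (volume.restrict (Ioi (0:ℝ))))
    -- R_x = ∫_x^∞ ξ(z) ψ(z) dz  (a rank-accumulating operator-valued integral)
    (R : ℝ → (H →L[ℂ] H))
    (hR : ∀ x : ℝ, ∀ v : H, R x v = ∫ z in Ioi x, (ψ z v) • ξ z)
    -- F x is a two-sided inverse of I + R_x for x > x₀
    (F : ℝ → (H →L[ℂ] H))
    (hF : ∀ x : ℝ, x₀ < x → (1 + R x) * F x = 1 ∧ F x * (1 + R x) = 1)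
    (T : ℝ → ℝ → ℂ)
    (hT : ∀ x y : ℝ, T x y = -(ψ x (F x (ξ y)))) :
    ∀ x y : ℝ, x₀ < x → x < y →
      ψ x (ξ y) + T x y + (∫ z in Ioi x, T x z * ψ z (ξ y)) = 0 := by
  intro x y hx hxy
  set v := ξ y with hv
  have hψm := hψ.aestronglyMeasurable
  have hξm := hξ.aestronglyMeasurable
  have hle : (volume.restrict (Ioi x)) ≤ volume.restrict (Ioi (0:ℝ)) :=
    Measure.restrict_mono (Ioi_subset_Ioi (le_trans hx₀ hx.le)) le_rfl
  have hmulint : Integrable (fun z => ‖ψ z‖ * ‖ξ z‖) (volume.restrict (Ioi (0:ℝ))) := by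
    have h := hξ.norm.smul (p := 2) (q := 2) (r := 1) (φ := fun z => ‖ψ z‖) hψ.norm
    have h2 := memLp_one_iff_integrable.mp h
    simpa [Pi.smul_apply, smul_eq_mul, Pi.mul_def] using h2
  have hg0 : AEStronglyMeasurable (fun z => (ψ z v) • ξ z) (volume.restrict (Ioi x)) := by
    apply AEStronglyMeasurable.smul
    · exact (ContinuousLinearMap.apply ℂ ℂ v).continuous.comp_aestronglyMeasurable
        (hψm.mono_measure hle)
    · exact hξm.mono_measure hle
  have hgint : Integrable (fun z => (ψ z v) • ξ z) (volume.restrict (Ioi x)) := by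
    refine Integrable.mono' (((hmulint.mono_measure hle)).const_mul ‖v‖) hg0 ?_
    filter_upwards with z
    calc ‖(ψ z v) • ξ z‖ = ‖ψ z v‖ * ‖ξ z‖ := norm_smul _ _
      _ ≤ (‖ψ z‖ * ‖v‖) * ‖ξ z‖ := by gcongr; exact (ψ z).le_opNorm v
      _ = ‖v‖ * (‖ψ z‖ * ‖ξ z‖) := by ring
  set L := (ψ x).comp (F x) with hL
  have hint : (∫ z in Ioi x, T x z * ψ z v) = -(L (R x v)) := by
    rw [hR x v, ← ContinuousLinearMap.integral_comp_comm L hgint, ← integral_neg]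
    congr 1
    funext z
    simp only [hT, hL, ContinuousLinearMap.coe_comp', Function.comp_apply,
      ContinuousLinearMap.map_smul, smul_eq_mul]
    ring
  have hkey : F x v + F x (R x v) = v := by
    have h2 := congrArg (fun A : H →L[ℂ] H => A v) (hF x hx).2
    simpa [ContinuousLinearMap.mul_apply, ContinuousLinearMap.add_apply, map_add] using h2
  have hRv : F x (R x v) = v - F x v := eq_sub_of_add_eq' hkey
  have hLv : L (R x v) = ψ x v - ψ x (F x v) := by
    simp [hL, hRv, map_sub]
  rw [hint, hT, hLv]
  ring
end

section
/- Let (s_j)_{j≥0} be a nonincreasing null sequence of positive reals with Σ s_j² < ∞ and let n(t) = #{j : t s_j² ≥ 1}. Then for all x > 0, log Π_{j=0}^∞ (1 + x² s_j²) = x² ∫₀^∞ n(t) / (t(t + x²)) dt. -/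
open Set MeasureTheory Filter

/-- Key single-term integral: for `b, c > 0`,
`∫ t in (b,∞), c/(t(t+c)) dt = log (1 + c/b)`, and the integrand is integrable. -/
lemma aux_logint (b c : ℝ) (hb : 0 < b) (hc : 0 < c) :
    IntegrableOn (fun t => c / (t * (t + c))) (Ioi b) volume ∧
      ∫ t in Ioi b, c / (t * (t + c)) = Real.log (1 + c / b) := by
  set F : ℝ → ℝ := fun t => Real.log t - Real.log (t + c) with hF
  have hderiv : ∀ t ∈ Ioi b, HasDerivAt F (c / (t * (t + c))) t := by
    intro t ht
    have ht0 : 0 < t := hb.trans ht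
    have h1 : HasDerivAt (fun u : ℝ => Real.log u) t⁻¹ t := Real.hasDerivAt_log ht0.ne'
    have h2 : HasDerivAt (fun u : ℝ => Real.log (u + c)) (1 / (t + c)) t := by
      have := ((hasDerivAt_id t).add_const c).log (by positivity)
      simpa using this
    have h3 := h1.sub h2
    refine h3.congr_deriv ?_
    have htc : (0:ℝ) < t + c := by positivity
    field_simp
    ring
  have hcont : ContinuousWithinAt F (Ici b) b := by
    apply ContinuousAt.continuousWithinAt
    exact (Real.continuousAt_log hb.ne').sub
      ((Real.continuousAt_log (by positivity)).comp (by fun_prop))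
  have htend : Tendsto F atTop (nhds 0) := by
    have h0 : Tendsto (fun t : ℝ => c / t) atTop (nhds 0) :=
      tendsto_const_nhds.div_atTop tendsto_id
    have hq : Tendsto (fun t : ℝ => 1 + c / t) atTop (nhds 1) := by
      simpa using (tendsto_const_nhds : Tendsto (fun _ : ℝ => (1:ℝ)) atTop (nhds 1)).add h0
    have h2 : Tendsto (fun t : ℝ => Real.log (1 + c / t)) atTop (nhds 0) := by
      have := (Real.continuousAt_log one_ne_zero).tendsto.comp hq
      simpa [Function.comp_def] using this
    have h3 : Tendsto (fun t : ℝ => -Real.log (1 + c / t)) atTop (nhds 0) := by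
      simpa using h2.neg
    apply h3.congr'
    filter_upwards [eventually_gt_atTop 0] with t ht
    have ht' : (0:ℝ) < t + c := by positivity
    have : (1 : ℝ) + c / t = (t + c) / t := by field_simp
    rw [this, Real.log_div ht'.ne' ht.ne', hF]
    ring
  have hnonneg : ∀ t ∈ Ioi b, 0 ≤ c / (t * (t + c)) := by
    intro t ht
    have ht0 : 0 < t := hb.trans ht
    positivity
  have hint : IntegrableOn (fun t => c / (t * (t + c))) (Ioi b) volume :=
    integrableOn_Ioi_deriv_of_nonneg hcont hderiv hnonneg htend
  refine ⟨hint, ?_⟩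
  rw [integral_Ioi_of_hasDerivAt_of_tendsto hcont hderiv hint htend]
  have hb' : (0:ℝ) < b + c := by positivity
  have : (1 : ℝ) + c / b = (b + c) / b := by field_simp
  rw [this, Real.log_div hb'.ne' hb.ne', hF]
  ring

/- For a nonincreasing null sequence s_j > 0 with Σ s_j² < ∞ and counting
function n(t) = #{j : t s_j² ≥ 1}, one has, for all x > 0,
log Π_j (1 + x²s_j²) = x² ∫₀^∞ n(t)/(t(t+x²)) dt. -/
theorem stmt14
    (s : ℕ → ℝ) (hpos : ∀ j, 0 < s j) (hmono : Antitone s)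
    (hlim : Filter.Tendsto s Filter.atTop (nhds 0))
    (hsum : Summable fun j => s j ^ 2)
    (n : ℝ → ℝ)
    (hn : ∀ t : ℝ, n t = (Nat.card {j : ℕ | 1 ≤ t * s j ^ 2} : ℝ)) :
    ∀ x : ℝ, 0 < x →
      Real.log (∏' j, (1 + x ^ 2 * s j ^ 2))
        = x ^ 2 * ∫ t in Ioi (0:ℝ), n t / (t * (t + x ^ 2)) := by
  intro x hx
  set c : ℝ := x ^ 2 with hcdef
  have hc : 0 < c := by positivity
  have hs2 : ∀ j, 0 < s j ^ 2 := fun j => by have := hpos j; positivity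
  -- summability of the logs
  have hsuma : Summable fun j => c * s j ^ 2 := hsum.mul_left c
  have hlog : Summable fun j => Real.log (1 + c * s j ^ 2) := by
    apply Summable.of_nonneg_of_le (fun j => Real.log_nonneg (by nlinarith [hs2 j]))
      (fun j => ?_) hsuma
    have h1 : (0:ℝ) < 1 + c * s j ^ 2 := by nlinarith [hs2 j]
    have := Real.log_le_sub_one_of_pos h1
    linarith
  -- step 1 : log of the product is the sum of logs
  have hprod : Real.log (∏' j, (1 + c * s j ^ 2))
      = ∑' j, Real.log (1 + c * s j ^ 2) := by
    have hp : HasProd (fun j => 1 + c * s j ^ 2)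
        (Real.exp (∑' j, Real.log (1 + c * s j ^ 2))) := by
      have h := hlog.hasSum.rexp
      have heq : (Real.exp ∘ fun j => Real.log (1 + c * s j ^ 2))
          = fun j => 1 + c * s j ^ 2 := by
        funext j
        exact Real.exp_log (by nlinarith [hs2 j])
      rwa [heq] at h
    rw [hp.tprod_eq, Real.log_exp]
  -- the family of indicator functions
  set b : ℕ → ℝ := fun j => (s j ^ 2)⁻¹ with hbdef
  have hbpos : ∀ j, 0 < b j := fun j => by have := hs2 j; positivity
  set g : ℝ → ℝ := fun t => c / (t * (t + c)) with hgdef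
  set f : ℕ → ℝ → ℝ := fun j => (Ici (b j)).indicator g with hfdef
  have hmem : ∀ j t, t ∈ Ici (b j) ↔ 1 ≤ t * s j ^ 2 := by
    intro j t
    rw [mem_Ici, hbdef]
    rw [inv_le_iff_one_le_mul₀ (hs2 j)]
  have hcb : ∀ j, c / b j = c * s j ^ 2 := fun j => by
    rw [hbdef]; field_simp
  -- integrability and value of each term
  have hint : ∀ j, Integrable (f j) (volume.restrict (Ioi (0:ℝ))) := by
    intro j
    have h := (aux_logint (b j) c (hbpos j) hc).1
    have h2 : IntegrableOn g (Ici (b j)) volume := by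
      rwa [integrableOn_Ici_iff_integrableOn_Ioi]
    exact (h2.integrable_indicator measurableSet_Ici).restrict
  have hval : ∀ j, ∫ t in Ioi (0:ℝ), f j t = Real.log (1 + c * s j ^ 2) := by
    intro j
    have hIci : Ici (b j) ∩ Ioi (0:ℝ) = Ici (b j) := by
      apply inter_eq_left.2
      intro t ht
      exact lt_of_lt_of_le (hbpos j) ht
    simp only [hfdef]
    rw [integral_indicator measurableSet_Ici,
      Measure.restrict_restrict measurableSet_Ici, hIci,
      integral_Ici_eq_integral_Ioi, (aux_logint (b j) c (hbpos j) hc).2, hcb j]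
  have hnonnegf : ∀ j t, 0 ≤ f j t := by
    intro j t
    apply Set.indicator_nonneg
    intro u hu
    have hu0 : 0 < u := lt_of_lt_of_le (hbpos j) hu
    rw [hgdef]
    positivity
  -- interchange sum and integral
  have hnorm : Summable fun j => ∫ t in Ioi (0:ℝ), ‖f j t‖ := by
    apply hlog.congr
    intro j
    rw [← hval j]
    apply integral_congr_ae
    filter_upwards with t
    exact (Real.norm_of_nonneg (hnonnegf j t)).symm
  have hinter := integral_tsum_of_summable_integral_norm hint hnorm
  -- pointwise identification of the sum with the counting function
  have hpt : ∀ t : ℝ, (∑' j, f j t) = n t * g t := by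
    intro t
    have h1 : (fun j => f j t)
        = Set.indicator {j : ℕ | 1 ≤ t * s j ^ 2} (fun _ => g t) := by
      funext j
      simp only [hfdef, Set.indicator_apply, mem_setOf_eq, hmem j t]
    rw [h1, ← tsum_subtype, tsum_const, hn t, nsmul_eq_mul]
  -- put everything together
  calc Real.log (∏' j, (1 + x ^ 2 * s j ^ 2))
      = ∑' j, Real.log (1 + c * s j ^ 2) := hprod
    _ = ∑' j, ∫ t in Ioi (0:ℝ), f j t := by
        exact tsum_congr fun j => (hval j).symm
    _ = ∫ t in Ioi (0:ℝ), ∑' j, f j t := hinter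
    _ = ∫ t in Ioi (0:ℝ), c * (n t / (t * (t + c))) := by
        apply integral_congr_ae
        filter_upwards with t
        rw [hpt t, hgdef]
        ring
    _ = c * ∫ t in Ioi (0:ℝ), n t / (t * (t + c)) := integral_const_mul _ _
    _ = x ^ 2 * ∫ t in Ioi (0:ℝ), n t / (t * (t + x ^ 2)) := by rw [hcdef]
end

section
/- For all λ ∈ ℂ and u, v ≥ 0, the Bessel function J₀ satisfies the product formula J₀(λu)·J₀(λv) = (1/2π) ∫₀^{2π} J₀(λ√(u² + v² − 2uv cos t)) dt. -/
open Complex MeasureTheory intervalIntegral Finset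
open scoped Real

set_option maxHeartbeats 1000000

section BesselAux

lemma summable_norm_J0aux (z : ℂ) :
    Summable (fun k : ℕ => ‖(-1 : ℂ) ^ k * (z / 2) ^ (2 * k) / ((k.factorial : ℂ)) ^ 2‖) := by
  apply Summable.of_nonneg_of_le (fun _ => norm_nonneg _) (fun k => ?_)
    (Real.summable_pow_div_factorial (‖z / 2‖ ^ 2))
  have h1 : ‖(-1 : ℂ) ^ k * (z / 2) ^ (2 * k) / ((k.factorial : ℂ)) ^ 2‖
      = (‖z / 2‖ ^ 2) ^ k / ((k.factorial : ℝ)) ^ 2 := by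
    simp [norm_div, norm_mul, norm_pow, pow_mul, Complex.norm_natCast]
  rw [h1]
  have hfac : (1 : ℝ) ≤ (k.factorial : ℝ) := by exact_mod_cast k.factorial_pos
  have : (k.factorial : ℝ) ≤ ((k.factorial : ℝ)) ^ 2 := by nlinarith
  exact div_le_div_of_nonneg_left (by positivity) (by positivity) this

lemma integral_exp_int (n : ℤ) :
    (∫ t in (0:ℝ)..(2 * Real.pi), Complex.exp (n * t * I))
      = if n = 0 then (2 * Real.pi : ℂ) else 0 := by
  rcases eq_or_ne n 0 with h | h
  · simp [h]
  · have hc : (n : ℂ) * I ≠ 0 := by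
      simp [Complex.ext_iff, h]
    have := integral_exp_mul_complex (a := (0:ℝ)) (b := 2 * Real.pi) hc
    simp only [if_neg h]
    rw [show (fun t : ℝ => Complex.exp ((n:ℂ) * t * I)) = fun t : ℝ => Complex.exp ((n * I) * t) by
      funext t; ring_nf, this]
    rw [show (n : ℂ) * I * (2 * Real.pi : ℝ) = n * (2 * Real.pi * I) by push_cast; ring]
    simp [Complex.exp_int_mul_two_pi_mul_I]

lemma factor_dist (u v t : ℝ) :
    ((u ^ 2 + v ^ 2 - 2 * u * v * Real.cos t : ℝ) : ℂ)
      = ((u : ℂ) - v * Complex.exp (t * I)) * ((u : ℂ) - v * Complex.exp (-(t * I))) := by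
  rw [show -((t:ℂ) * I) = ((-t : ℝ) : ℂ) * I by push_cast; ring]
  rw [Complex.exp_mul_I, Complex.exp_mul_I]
  push_cast
  rw [Complex.cos_neg, Complex.sin_neg, ← Complex.ofReal_cos, ← Complex.ofReal_sin]
  have h : ((Real.cos t : ℂ)) ^ 2 + ((Real.sin t : ℂ)) ^ 2 = 1 := by
    rw [Complex.ofReal_cos, Complex.ofReal_sin]
    exact Complex.cos_sq_add_sin_sq _
  linear_combination -(v : ℂ) ^ 2 * h + (v : ℂ) ^ 2 * ((Real.sin t : ℂ)) ^ 2 * Complex.I_sq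

noncomputable def coefC (u v : ℝ) (k a b : ℕ) : ℂ :=
  (k.choose a : ℂ) * (k.choose b : ℂ) * (u : ℂ) ^ a * (u : ℂ) ^ b
    * (-v : ℂ) ^ (k - a) * (-v : ℂ) ^ (k - b)

lemma expand_lem (u v : ℝ) (k : ℕ) (t : ℝ) :
      ((u ^ 2 + v ^ 2 - 2 * u * v * Real.cos t : ℝ) : ℂ) ^ k
        = ∑ a ∈ Finset.range (k + 1), ∑ b ∈ Finset.range (k + 1),
            ((k.choose a : ℂ) * (k.choose b : ℂ) * (u : ℂ) ^ a * (u : ℂ) ^ b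
              * (-v : ℂ) ^ (k - a) * (-v : ℂ) ^ (k - b))
              * Complex.exp ((((b : ℤ) - a : ℤ) : ℂ) * t * I) := by
    rw [factor_dist, mul_pow]
    rw [show ((u : ℂ) - v * Complex.exp (t * I)) = (u : ℂ) + (-v) * Complex.exp (t * I) by ring]
    rw [show ((u : ℂ) - v * Complex.exp (-(t * I))) = (u : ℂ) + (-v) * Complex.exp (-(t * I)) by
      ring]
    rw [add_pow, add_pow, Finset.sum_mul_sum]
    refine Finset.sum_congr rfl fun a ha => Finset.sum_congr rfl fun b hb => ?_
    have ha' : a ≤ k := by have := Finset.mem_range.mp ha; omega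
    have hb' : b ≤ k := by have := Finset.mem_range.mp hb; omega
    have he : Complex.exp ((((b : ℤ) - a : ℤ) : ℂ) * t * I)
        = Complex.exp (t * I) ^ (k - a) * Complex.exp (-(t * I)) ^ (k - b) := by
      rw [← Complex.exp_nat_mul, ← Complex.exp_nat_mul, ← Complex.exp_add]
      congr 1
      push_cast [Nat.cast_sub ha', Nat.cast_sub hb']
      ring
    rw [he, mul_pow, mul_pow]
    ring

lemma expand_lem' (u v : ℝ) (k : ℕ) (t : ℝ) :
      ((u ^ 2 + v ^ 2 - 2 * u * v * Real.cos t : ℝ) : ℂ) ^ k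
        = ∑ p ∈ Finset.range (k + 1) ×ˢ Finset.range (k + 1),
            coefC u v k p.1 p.2 * Complex.exp ((((p.2 : ℤ) - p.1 : ℤ) : ℂ) * t * I) := by
  rw [Finset.sum_product, expand_lem]
  rfl

lemma moment (u v : ℝ) (k : ℕ) :
    (∫ t in (0:ℝ)..(2 * Real.pi), ((u ^ 2 + v ^ 2 - 2 * u * v * Real.cos t : ℝ) : ℂ) ^ k)
      = (2 * Real.pi : ℂ) *
          ∑ a ∈ Finset.range (k + 1),
            ((k.choose a : ℂ)) ^ 2 * (u : ℂ) ^ (2 * a) * (v : ℂ) ^ (2 * (k - a)) := by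
  simp only [expand_lem' u v k]
  have hint : ∀ p ∈ Finset.range (k + 1) ×ˢ Finset.range (k + 1),
      IntervalIntegrable
        (fun t : ℝ => coefC u v k p.1 p.2 * Complex.exp ((((p.2 : ℤ) - p.1 : ℤ) : ℂ) * t * I))
        MeasureTheory.volume 0 (2 * Real.pi) := by
    intro p _
    have c : Continuous (fun t : ℝ =>
        coefC u v k p.1 p.2 * Complex.exp ((((p.2 : ℤ) - p.1 : ℤ) : ℂ) * t * I)) := by fun_prop
    exact c.intervalIntegrable _ _
  rw [intervalIntegral.integral_finset_sum hint]
  have step : ∀ p ∈ Finset.range (k+1) ×ˢ Finset.range (k+1),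
      (∫ t in (0:ℝ)..(2 * Real.pi),
          coefC u v k p.1 p.2 * Complex.exp ((((p.2 : ℤ) - p.1 : ℤ) : ℂ) * t * I))
      = if p.2 = p.1 then coefC u v k p.1 p.2 * (2 * Real.pi : ℂ) else 0 := by
    intro p _
    rw [intervalIntegral.integral_const_mul, integral_exp_int]
    rcases eq_or_ne p.2 p.1 with h | h
    · rw [if_pos (by omega), if_pos h]
    · rw [if_neg (by omega), if_neg h, mul_zero]
  rw [Finset.sum_congr rfl step]
  rw [Finset.sum_product]
  have inner : ∀ a ∈ Finset.range (k + 1),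
      (∑ b ∈ Finset.range (k + 1), if b = a then coefC u v k a b * (2 * Real.pi : ℂ) else 0)
        = coefC u v k a a * (2 * Real.pi : ℂ) := by
    intro a ha
    rw [Finset.sum_ite_eq' _ a (fun b => coefC u v k a b * (2 * Real.pi : ℂ)), if_pos ha]
  rw [Finset.sum_congr rfl inner, Finset.mul_sum]
  refine Finset.sum_congr rfl fun a _ => ?_
  unfold coefC
  simp only [pow_mul, neg_sq]
  ring_nf
  rw [mul_comm (k - a) 2, pow_mul (-1 : ℂ) 2 (k - a)]
  norm_num

end BesselAux

/-- The Bessel function J₀ of the first kind of order zero, as the entire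
function J₀(z) = Σ_{k≥0} (−1)^k (z/2)^{2k}/(k!)², extending
J₀(x) = (1/π)∫₀^π cos(x sinθ)dθ. -/
noncomputable def J0c (z : ℂ) : ℂ :=
  ∑' k : ℕ, (-1) ^ k * (z / 2) ^ (2 * k) / ((k.factorial : ℂ)) ^ 2

/- Product formula: for all λ ∈ ℂ and u, v ≥ 0,
J₀(λu)·J₀(λv) = (1/2π) ∫₀^{2π} J₀(λ√(u² + v² − 2uv cos t)) dt. -/
theorem stmt17 (lam : ℂ) (u v : ℝ) (hu : 0 ≤ u) (hv : 0 ≤ v) :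
    J0c (lam * u) * J0c (lam * v)
      = (1 / (2 * Real.pi)) •
          ∫ t in (0:ℝ)..(2 * Real.pi),
            J0c (lam * Real.sqrt (u ^ 2 + v ^ 2 - 2 * u * v * Real.cos t)) := by
  have hπ : (0 : ℝ) < 2 * Real.pi := by positivity
  set w : ℝ → ℝ := fun t => u ^ 2 + v ^ 2 - 2 * u * v * Real.cos t with hw_def
  have hw0 : ∀ t, 0 ≤ w t := by
    intro t
    have h1 : Real.cos t ≤ 1 := Real.cos_le_one t
    have h2 : 0 ≤ u * v := mul_nonneg hu hv
    show 0 ≤ u ^ 2 + v ^ 2 - 2 * u * v * Real.cos t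
    nlinarith [sq_nonneg (u - v)]
  have hwle : ∀ t, w t ≤ (u + v) ^ 2 := by
    intro t
    have h1 : -1 ≤ Real.cos t := Real.neg_one_le_cos t
    have h2 : 0 ≤ u * v := mul_nonneg hu hv
    show u ^ 2 + v ^ 2 - 2 * u * v * Real.cos t ≤ (u + v) ^ 2
    nlinarith
  -- the k-th term of the series for the integrand
  set g : ℕ → ℝ → ℂ := fun k t =>
    ((-1 : ℂ) ^ k * lam ^ (2 * k) / ((4 : ℂ) ^ k * ((k.factorial : ℂ)) ^ 2)) * ((w t : ℝ) : ℂ) ^ k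
    with hg_def
  have hhalf : ∀ (z : ℂ) (x : ℝ) (k : ℕ),
      (z * x / 2) ^ (2 * k) = z ^ (2 * k) * ((x : ℝ) : ℂ) ^ (2 * k) / 4 ^ k := by
    intro z x k
    rw [div_pow, mul_pow, pow_mul (2 : ℂ)]
    norm_num
  have hterm : ∀ k t, (-1 : ℂ) ^ k * ((lam * Real.sqrt (w t)) / 2) ^ (2 * k)
      / ((k.factorial : ℂ)) ^ 2 = g k t := by
    intro k t
    have hsq : ((Real.sqrt (w t) : ℝ) : ℂ) ^ (2 * k) = ((w t : ℝ) : ℂ) ^ k := by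
      rw [pow_mul]
      norm_cast
      rw [Real.sq_sqrt (hw0 t)]
    rw [hhalf, hsq]
    ring
  have hJ : ∀ t, J0c (lam * Real.sqrt (w t)) = ∑' k, g k t := by
    intro t
    unfold J0c
    exact tsum_congr fun k => hterm k t
  -- integrability and uniform bounds
  have hcont : ∀ k, Continuous (g k) := by
    intro k
    apply Continuous.mul continuous_const
    apply Continuous.pow
    apply Complex.continuous_ofReal.comp
    fun_prop
  have hInt : ∀ k, Integrable (g k) (volume.restrict (Set.Ioc 0 (2 * Real.pi))) :=
    fun k => ((hcont k).integrableOn_Ioc)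
  set M : ℝ := ‖lam‖ ^ 2 * (u + v) ^ 2 / 4 with hM_def
  have hbound : ∀ k t, ‖g k t‖ ≤ M ^ k / k.factorial := by
    intro k t
    have h1 : ‖g k t‖ = (‖lam‖ ^ 2 / 4) ^ k / ((k.factorial : ℝ)) ^ 2 * (w t) ^ k := by
      rw [hg_def]
      simp only [norm_mul, norm_div, norm_pow, norm_neg, norm_one, one_pow, one_mul,
        Complex.norm_real, Real.norm_eq_abs, Complex.norm_natCast, Complex.norm_ofNat]
      rw [_root_.abs_of_nonneg (hw0 t), pow_mul, div_pow]
      ring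
    rw [h1]
    have hfac1 : (1 : ℝ) ≤ (k.factorial : ℝ) := by exact_mod_cast k.factorial_pos
    have e1 : (w t) ^ k ≤ ((u + v) ^ 2) ^ k := pow_le_pow_left₀ (hw0 t) (hwle t) k
    have e2 : (‖lam‖ ^ 2 / 4) ^ k / ((k.factorial : ℝ)) ^ 2
        ≤ (‖lam‖ ^ 2 / 4) ^ k / ((k.factorial : ℝ)) := by
      have hk0 : (0:ℝ) < (k.factorial : ℝ) := by exact_mod_cast k.factorial_pos
      have hnum : (0:ℝ) ≤ (‖lam‖ ^ 2 / 4) ^ k := by positivity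
      apply div_le_div_of_nonneg_left hnum hk0 (by nlinarith)
    calc (‖lam‖ ^ 2 / 4) ^ k / ((k.factorial : ℝ)) ^ 2 * (w t) ^ k
        ≤ (‖lam‖ ^ 2 / 4) ^ k / ((k.factorial : ℝ)) * ((u + v) ^ 2) ^ k :=
          mul_le_mul e2 e1 (pow_nonneg (hw0 t) k) (by positivity)
      _ = M ^ k / k.factorial := by
          rw [hM_def, show ‖lam‖ ^ 2 * (u + v) ^ 2 / 4 = (‖lam‖ ^ 2 / 4) * ((u + v) ^ 2) by ring,
            mul_pow]
          ring
  have hsumM : Summable (fun k : ℕ => M ^ k / (k.factorial : ℝ) * (2 * Real.pi)) :=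
    (Real.summable_pow_div_factorial M).mul_right _
  have hIntNorm : ∀ k : ℕ,
      (∫ t, ‖g k t‖ ∂(volume.restrict (Set.Ioc 0 (2 * Real.pi))))
        ≤ M ^ k / (k.factorial : ℝ) * (2 * Real.pi) := by
    intro k
    have h := MeasureTheory.norm_setIntegral_le_of_norm_le_const
      (μ := volume) (s := Set.Ioc 0 (2 * Real.pi)) (C := M ^ k / (k.factorial : ℝ))
      (f := fun t => ‖g k t‖) (by rw [Real.volume_Ioc]; exact ENNReal.ofReal_lt_top)
      (fun t _ => by rw [Real.norm_of_nonneg (norm_nonneg _)]; exact hbound k t)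
    have h2 : (∫ t in Set.Ioc 0 (2 * Real.pi), ‖g k t‖)
        ≤ ‖∫ t in Set.Ioc 0 (2 * Real.pi), ‖g k t‖‖ := by
      rw [Real.norm_eq_abs]; exact le_abs_self _
    refine h2.trans (h.trans ?_)
    simp [Real.volume_real_Ioc_of_le hπ.le]
  have hsumInt : Summable (fun k : ℕ =>
      ∫ t, ‖g k t‖ ∂(volume.restrict (Set.Ioc 0 (2 * Real.pi)))) := by
    apply Summable.of_nonneg_of_le (fun k => integral_nonneg fun t => norm_nonneg _)
      (fun k => hIntNorm k) hsumM
  -- the swap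
  have hswap : (∑' k, ∫ t, g k t ∂(volume.restrict (Set.Ioc 0 (2 * Real.pi))))
      = ∫ t, (∑' k, g k t) ∂(volume.restrict (Set.Ioc 0 (2 * Real.pi))) :=
    MeasureTheory.integral_tsum_of_summable_integral_norm hInt hsumInt
  -- evaluate each integral via the moment lemma
  have hmom : ∀ k : ℕ, (∫ t, g k t ∂(volume.restrict (Set.Ioc 0 (2 * Real.pi))))
      = ((-1 : ℂ) ^ k * lam ^ (2 * k) / ((4 : ℂ) ^ k * ((k.factorial : ℂ)) ^ 2)) *
          ((2 * Real.pi : ℂ) * ∑ a ∈ Finset.range (k + 1),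
            ((k.choose a : ℂ)) ^ 2 * (u : ℂ) ^ (2 * a) * (v : ℂ) ^ (2 * (k - a))) := by
    intro k
    rw [← intervalIntegral.integral_of_le hπ.le]
    rw [hg_def]
    simp only []
    rw [intervalIntegral.integral_const_mul]
    rw [hw_def]
    rw [moment u v k]
  -- putting the right-hand side together
  have hRHS : (∫ t in (0:ℝ)..(2 * Real.pi),
        J0c (lam * Real.sqrt (u ^ 2 + v ^ 2 - 2 * u * v * Real.cos t)))
      = ∑' k : ℕ, ((-1 : ℂ) ^ k * lam ^ (2 * k) / ((4 : ℂ) ^ k * ((k.factorial : ℂ)) ^ 2)) *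
          ((2 * Real.pi : ℂ) * ∑ a ∈ Finset.range (k + 1),
            ((k.choose a : ℂ)) ^ 2 * (u : ℂ) ^ (2 * a) * (v : ℂ) ^ (2 * (k - a))) := by
    rw [intervalIntegral.integral_of_le hπ.le]
    have : ∀ t, J0c (lam * Real.sqrt (u ^ 2 + v ^ 2 - 2 * u * v * Real.cos t)) = ∑' k, g k t :=
      fun t => hJ t
    rw [MeasureTheory.integral_congr_ae (Filter.Eventually.of_forall fun t => this t)]
    rw [← hswap]
    exact tsum_congr fun k => hmom k
  -- Cauchy product on the left-hand side
  have hLHS : J0c (lam * u) * J0c (lam * v)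
      = ∑' n : ℕ, ∑ kl ∈ Finset.HasAntidiagonal.antidiagonal n,
          ((-1 : ℂ) ^ kl.1 * ((lam * u) / 2) ^ (2 * kl.1) / ((kl.1.factorial : ℂ)) ^ 2) *
          ((-1 : ℂ) ^ kl.2 * ((lam * v) / 2) ^ (2 * kl.2) / ((kl.2.factorial : ℂ)) ^ 2) := by
    unfold J0c
    exact tsum_mul_tsum_eq_tsum_sum_antidiagonal_of_summable_norm
      (summable_norm_J0aux (lam * u)) (summable_norm_J0aux (lam * v))
  rw [hLHS, hRHS, Complex.real_smul, ← tsum_mul_left]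
  refine tsum_congr fun n => ?_
  rw [Finset.Nat.sum_antidiagonal_eq_sum_range_succ_mk]
  have hπC : ((2 * Real.pi : ℝ) : ℂ) ≠ 0 := by
    exact_mod_cast ne_of_gt hπ
  rw [show (((1 / (2 * Real.pi) : ℝ)) : ℂ) *
      ((-1 : ℂ) ^ n * lam ^ (2 * n) / ((4 : ℂ) ^ n * ((n.factorial : ℂ)) ^ 2) *
        ((2 * Real.pi : ℂ) * ∑ a ∈ Finset.range (n + 1),
          ((n.choose a : ℂ)) ^ 2 * (u : ℂ) ^ (2 * a) * (v : ℂ) ^ (2 * (n - a))))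
      = ∑ a ∈ Finset.range (n + 1),
          ((-1 : ℂ) ^ n * lam ^ (2 * n) / ((4 : ℂ) ^ n * ((n.factorial : ℂ)) ^ 2)) *
            (((n.choose a : ℂ)) ^ 2 * (u : ℂ) ^ (2 * a) * (v : ℂ) ^ (2 * (n - a))) by
    rw [Finset.mul_sum, Finset.mul_sum, Finset.mul_sum]
    refine Finset.sum_congr rfl fun a _ => ?_
    have hπne : (Real.pi : ℂ) ≠ 0 := by exact_mod_cast Real.pi_ne_zero
    push_cast
    field_simp]
  refine Finset.sum_congr rfl fun a ha => ?_
  have ha' : a ≤ n := by have := Finset.mem_range.mp ha; omega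
  have hfac : ((n.choose a : ℂ)) * (a.factorial : ℂ) * ((n - a).factorial : ℂ)
      = (n.factorial : ℂ) := by
    exact_mod_cast congrArg (Nat.cast : ℕ → ℂ) (Nat.choose_mul_factorial_mul_factorial ha')
  have hsign : (-1 : ℂ) ^ a * (-1 : ℂ) ^ (n - a) = (-1) ^ n := by
    rw [← pow_add]; congr 1; omega
  have hlam : lam ^ (2 * a) * lam ^ (2 * (n - a)) = lam ^ (2 * n) := by
    rw [← pow_add]; congr 1; omega
  have h4 : (4 : ℂ) ^ a * 4 ^ (n - a) = 4 ^ n := by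
    rw [← pow_add]; congr 1; omega
  have hfa : ((a.factorial : ℂ)) ≠ 0 := by exact_mod_cast a.factorial_ne_zero
  have hfna : (((n - a).factorial : ℂ)) ≠ 0 := by exact_mod_cast (n - a).factorial_ne_zero
  have hfn : ((n.factorial : ℂ)) ≠ 0 := by exact_mod_cast n.factorial_ne_zero
  have h4a : ((4 : ℂ)) ^ a ≠ 0 := by norm_num
  have h4na : ((4 : ℂ)) ^ (n - a) ≠ 0 := by norm_num
  rw [hhalf lam u a, hhalf lam v (n - a)]
  field_simp
  rw [← h4, ← hlam, ← hsign, ← hfac]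
  ring
end
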